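/- Let Z₁,...,Z_N be iid samples of Z ∼ P and P_N the empirical measure. Suppose κ := min{(1−α) − lim_{z↑ν} F(z), lim_{z↓ν} F(z) − (1−α)} > 0, where ν = V@R_α^P(Z) and F is the cdf of Z. Then P(V@R_α^{P_N} = V@R_α^P(Z)) ≥ 1 − 2e^{−2Nκ²}. -/

import Mathlib

open MeasureTheory ProbabilityTheory Function

/-- Empirical cdf from samples `Z 0, ..., Z (N-1)`. -/
noncomputable def empCdf {Ω : Type*} (Z : ℕ → Ω → ℝ) (N : ℕ) (ω : Ω) (z : ℝ) : ℝ :=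
  (N : ℝ)⁻¹ * ∑ i ∈ Finset.range N, if Z i ω ≤ z then (1 : ℝ) else 0

/-- If `κ = min{(1-α) - F(ν-), F(ν+) - (1-α)} > 0`, then the empirical Value-at-Risk
equals the true Value-at-Risk with probability at least `1 - 2 exp(-2Nκ²)`. -/
theorem stmt_8 {Ω : Type*} [MeasurableSpace Ω] (P : Measure Ω) [IsProbabilityMeasure P]
    (μ : Measure ℝ) [IsProbabilityMeasure μ]
    (Z : ℕ → Ω → ℝ) (hmeas : ∀ i, Measurable (Z i))
    (hlaw : ∀ i, Measure.map (Z i) P = μ)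
    (hindep : iIndepFun Z P)
    (N : ℕ) (hN : 0 < N)
    (α : ℝ) (hα : α ∈ Set.Ioo (0 : ℝ) 1)
    (F : ℝ → ℝ) (hF : F = fun z => (μ (Set.Iic z)).toReal)
    (ν : ℝ) (hν : ν = sInf {z : ℝ | 1 - α ≤ F z})
    (κ : ℝ) (hκdef : κ = min ((1 - α) - leftLim F ν) (rightLim F ν - (1 - α)))
    (hκ : 0 < κ)
    (hDKW : ∀ ε : ℝ, 0 < ε →
      (P {ω | ∃ z : ℝ, ε < |empCdf Z N ω z - F z|}).toReal ≤
        2 * Real.exp (-2 * N * ε ^ 2)) :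
    1 - 2 * Real.exp (-2 * N * κ ^ 2) ≤
      (P {ω | sInf {z : ℝ | 1 - α ≤ empCdf Z N ω z} = ν}).toReal := by
  have hmono : Monotone F := by
    rw [hF]
    intro a b hab
    exact ENNReal.toReal_mono (measure_ne_top μ _)
      (measure_mono (Set.Iic_subset_Iic.2 hab))
  have hκ1 : κ ≤ (1 - α) - leftLim F ν := by rw [hκdef]; exact min_le_left _ _
  have hκ2 : κ ≤ rightLim F ν - (1 - α) := by rw [hκdef]; exact min_le_right _ _
  -- main step: for each ε ∈ (0, κ), the bound with ε holds
  have key : ∀ ε : ℝ, 0 < ε → ε < κ →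
      1 - 2 * Real.exp (-2 * N * ε ^ 2) ≤
        (P {ω | sInf {z : ℝ | 1 - α ≤ empCdf Z N ω z} = ν}).toReal := by
    intro ε hε hεκ
    set G : Set Ω := {ω | sInf {z : ℝ | 1 - α ≤ empCdf Z N ω z} = ν} with hG
    set B : Set Ω := {ω | ∃ z : ℝ, ε < |empCdf Z N ω z - F z|} with hB
    -- pointwise: Bᶜ ⊆ G
    have hsub : Bᶜ ⊆ G := by
      intro ω hω
      simp only [hB, Set.mem_compl_iff, Set.mem_setOf_eq, not_exists, not_lt] at hω
      have hub : ∀ z ∈ {z : ℝ | 1 - α ≤ empCdf Z N ω z}, ν ≤ z := by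
        intro z hz
        by_contra hlt
        push_neg at hlt
        have h1 : F z ≤ leftLim F ν := hmono.le_leftLim hlt
        have h2 : |empCdf Z N ω z - F z| ≤ ε := hω z
        have h3 : empCdf Z N ω z ≤ F z + ε := by
          have := abs_le.1 h2
          linarith [this.2]
        have : (1 : ℝ) - α ≤ empCdf Z N ω z := hz
        linarith
      have hmem : ∀ z, ν < z → z ∈ {z : ℝ | 1 - α ≤ empCdf Z N ω z} := by
        intro z hz
        have h1 : rightLim F ν ≤ F z := hmono.rightLim_le hz
        have h2 : |empCdf Z N ω z - F z| ≤ ε := hω z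
        have h3 : F z - ε ≤ empCdf Z N ω z := by
          have := abs_le.1 h2
          linarith [this.1]
        show (1 : ℝ) - α ≤ empCdf Z N ω z
        linarith
      have hbdd : BddBelow {z : ℝ | 1 - α ≤ empCdf Z N ω z} := ⟨ν, hub⟩
      have hne : (Set.Ioi ν).Nonempty := ⟨ν + 1, by simp⟩
      have hle : sInf {z : ℝ | 1 - α ≤ empCdf Z N ω z} ≤ ν := by
        have := csInf_le_csInf hbdd hne (fun z hz => hmem z hz)
        rwa [csInf_Ioi] at this
      have hge : ν ≤ sInf {z : ℝ | 1 - α ≤ empCdf Z N ω z} :=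
        le_csInf ⟨ν + 1, hmem _ (by linarith)⟩ hub
      exact le_antisymm hle hge
    -- measure bound via subadditivity
    have h1 : (1 : ENNReal) ≤ P G + P B := by
      calc (1 : ENNReal) = P Set.univ := (measure_univ (μ := P)).symm
        _ ≤ P (G ∪ B) := by
            apply measure_mono
            intro ω _
            by_cases h : ω ∈ B
            · exact Or.inr h
            · exact Or.inl (hsub h)
        _ ≤ P G + P B := measure_union_le _ _
    have hGfin : P G ≠ ⊤ := measure_ne_top P G
    have hBfin : P B ≠ ⊤ := measure_ne_top P B
    have h2 : (1 : ℝ) ≤ (P G).toReal + (P B).toReal := by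
      have := ENNReal.toReal_mono (by finiteness) h1
      rwa [ENNReal.toReal_one, ENNReal.toReal_add hGfin hBfin] at this
    have h3 : (P B).toReal ≤ 2 * Real.exp (-2 * N * ε ^ 2) := hDKW ε hε
    linarith
  -- take limit ε → κ⁻
  have hne : (nhdsWithin κ (Set.Iio κ)).NeBot := nhdsLT_neBot κ
  have htends : Filter.Tendsto (fun ε : ℝ => 1 - 2 * Real.exp (-2 * N * ε ^ 2))
      (nhdsWithin κ (Set.Iio κ)) (nhds (1 - 2 * Real.exp (-2 * N * κ ^ 2))) := by
    have hc : Continuous (fun ε : ℝ => 1 - 2 * Real.exp (-2 * N * ε ^ 2)) := by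
      continuity
    exact (hc.tendsto κ).mono_left nhdsWithin_le_nhds
  refine le_of_tendsto htends ?_
  have hmem : Set.Ioo 0 κ ∈ nhdsWithin κ (Set.Iio κ) :=
    Ioo_mem_nhdsLT_of_mem ⟨hκ, le_rfl⟩
  filter_upwards [hmem] with ε hε
  exact key ε hε.1 hε.2
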